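/- Let p be a prime and c an integer not divisible by p. Then, as polynomials over Z/pZ, ∏_{i=1}^{p-1}(ix - i + c) ≡ -(x + x^2 + ... + x^{p-1}) (mod p). If p divides c, then the product is congruent to -(x-1)^{p-1} (mod p). -/

import Mathlib

open Polynomial Finset

noncomputable def v (n : ℕ) : ℤ :=
  if n = 0 then -1 else
  ((1 - X) * ∏ j ∈ Finset.range (2 * n - 2),
      (C ((2 * n : ℤ) - 3 - (j : ℤ)) + C (j : ℤ) * X)).coeff (n - 1)

section Aux
variable (p : ℕ) [hpf : Fact p.Prime]

lemma lemA : ∏ a : ZMod p, (X - C a) = X ^ p - X := by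
  have hp2 : 1 < p := hpf.out.one_lt
  have hmonic : (X ^ p - X : (ZMod p)[X]).Monic := by
    have h1 : p - 1 + 1 = p := Nat.succ_pred_eq_of_pos hpf.out.pos
    have hm : (X ^ (p - 1 + 1) - X : (ZMod p)[X]).Monic := by
      apply monic_X_pow_sub
      rw [degree_X]
      exact_mod_cast (show 1 < p - 1 + 1 by omega)
    rwa [h1] at hm
  have h := (GaloisField.splits_zmod_X_pow_sub_X p).eq_prod_roots_of_monic hmonic
  have hroots : (X ^ p - X : (ZMod p)[X]).roots = Finset.univ.val := by
    convert FiniteField.roots_X_pow_card_sub_X (ZMod p)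
    · rfl
    exact (ZMod.card p).symm
  rw [hroots] at h
  rw [Finset.prod_eq_multiset_prod, ← h]

lemma lemB : ∏ a ∈ Finset.univ.erase (0 : ZMod p), (X - C a) = X ^ (p - 1) - 1 := by
  have h := Finset.mul_prod_erase Finset.univ (fun a : ZMod p => X - C a) (Finset.mem_univ 0)
  rw [lemA p] at h
  simp only [map_zero, sub_zero] at h
  apply mul_left_cancel₀ (X_ne_zero : (X : (ZMod p)[X]) ≠ 0)
  have h1 : p - 1 + 1 = p := Nat.succ_pred_eq_of_pos hpf.out.pos
  rw [h, mul_sub, mul_one, ← pow_succ', h1]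

lemma lemC : ∏ a ∈ Finset.univ.erase (0 : ZMod p), (X - 1 - C a) = (X - 1) ^ (p - 1) - 1 := by
  have h := congrArg (fun q : (ZMod p)[X] => q.comp (X - 1)) (lemB p)
  simpa [Polynomial.prod_comp, sub_comp, pow_comp, one_comp, X_comp, C_comp] using h

lemma lemD : ∏ a ∈ Finset.univ.erase (0 : ZMod p), (X - 1 + C a) = (X - 1) ^ (p - 1) - 1 := by
  rw [← lemC p]
  apply Finset.prod_nbij' (fun a => -a) (fun a => -a) <;> intro a ha <;> simp_all [sub_neg_eq_add]

lemma reindex {M : Type*} [CommMonoid M] (f : ZMod p → M) :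
    ∏ i ∈ Finset.Icc 1 (p - 1), f (i : ZMod p) = ∏ a ∈ Finset.univ.erase (0 : ZMod p), f a := by
  have hp2 : 1 < p := hpf.out.one_lt
  apply Finset.prod_nbij' (fun n : ℕ => (n : ZMod p)) (fun a : ZMod p => a.val)
  · intro n hn
    simp only [Finset.mem_Icc] at hn
    simp only [Finset.mem_erase, Finset.mem_univ, and_true]
    rw [Ne, ZMod.natCast_eq_zero_iff]
    intro hdvd
    have := Nat.le_of_dvd (by omega) hdvd
    omega
  · intro a ha
    simp only [Finset.mem_erase, Finset.mem_univ, and_true] at ha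
    have h1 : a.val ≠ 0 := by simpa [ZMod.val_eq_zero] using ha
    have h2 : a.val < p := ZMod.val_lt a
    simp only [Finset.mem_Icc]
    omega
  · intro n hn
    simp only [Finset.mem_Icc] at hn
    exact ZMod.val_cast_of_lt (by omega)
  · intro a _
    simp [ZMod.natCast_val, ZMod.cast_id]
  · intro n _
    rfl

lemma wilson_prod : ∏ a ∈ Finset.univ.erase (0 : ZMod p), a = -1 := by
  rw [show (∏ a ∈ Finset.univ.erase (0 : ZMod p), a) = ∏ a ∈ Finset.univ.erase (0 : ZMod p), id a from rfl,
    ← reindex p (id : ZMod p → ZMod p)]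
  simp only [id]
  have h1 : Finset.Icc 1 (p - 1) = Finset.Ico 1 p := by
    rw [← Finset.Ico_add_one_right_eq_Icc]
    congr 1
    exact Nat.succ_pred_eq_of_pos hpf.out.pos
  have : ∏ i ∈ Finset.Icc 1 (p - 1), ((i : ZMod p)) = (((p-1).factorial : ℕ) : ZMod p) := by
    rw [← Nat.cast_prod, h1]
    congr 1
    have h2 : p - 1 + 1 = p := Nat.succ_pred_eq_of_pos hpf.out.pos
    have h3 := Finset.prod_Ico_id_eq_factorial (p - 1)
    rw [h2] at h3
    exact h3
  rw [this]
  exact ZMod.wilsons_lemma p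

lemma card_erase : (Finset.univ.erase (0 : ZMod p)).card = p - 1 := by
  rw [Finset.card_erase_of_mem (Finset.mem_univ 0), Finset.card_univ, ZMod.card]

lemma geom_eq : ((X : (ZMod p)[X]) - 1) ^ (p - 1) = ∑ i ∈ Finset.range p, X ^ i := by
  have hXs : ((X : (ZMod p)[X]) - 1) ≠ 0 := by
    have := X_sub_C_ne_zero (1 : ZMod p)
    simpa using this
  apply mul_left_cancel₀ hXs
  have h1 : p - 1 + 1 = p := Nat.succ_pred_eq_of_pos hpf.out.pos
  have hc : CharP (ZMod p)[X] p := by infer_instance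
  calc (X - 1 : (ZMod p)[X]) * (X - 1) ^ (p - 1) = (X - 1) ^ p := by
        rw [← pow_succ', h1]
    _ = X ^ p - 1 := by rw [sub_pow_char]; simp
    _ = (X - 1) * ∑ i ∈ Finset.range p, X ^ i := by
        rw [mul_comm, geom_sum_mul]

end Aux

theorem prod_linear_mod_p (p : ℕ) (hp : p.Prime) (c : ℤ) :
    ((¬ ((p : ℤ) ∣ c)) →
      (∏ i ∈ Finset.Icc 1 (p - 1),
          (C (i : ℤ) * X - C (i : ℤ) + C c)).map (Int.castRingHom (ZMod p)) =
        -(∑ i ∈ Finset.Icc 1 (p - 1), X ^ i)) ∧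
    (((p : ℤ) ∣ c) →
      (∏ i ∈ Finset.Icc 1 (p - 1),
          (C (i : ℤ) * X - C (i : ℤ) + C c)).map (Int.castRingHom (ZMod p)) =
        -(X - 1) ^ (p - 1)) := by
  haveI hpf : Fact p.Prime := ⟨hp⟩
  set c' : ZMod p := ((c : ℤ) : ZMod p) with hc'def
  have hmap : (∏ i ∈ Finset.Icc 1 (p - 1),
      (C (i : ℤ) * X - C (i : ℤ) + C c)).map (Int.castRingHom (ZMod p)) =
      ∏ a ∈ Finset.univ.erase (0 : ZMod p), (C a * X - C a + C c') := by
    rw [Polynomial.map_prod, ← reindex p (fun a : ZMod p => C a * X - C a + C c')]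
    apply Finset.prod_congr rfl
    intro i _
    simp only [Polynomial.map_add, Polynomial.map_sub, Polynomial.map_mul, map_C, map_X,
      eq_intCast, Int.cast_natCast, hc'def, Polynomial.map_natCast, Polynomial.map_intCast]
    simp
  constructor
  · -- p ∤ c
    intro hndvd
    have hc' : c' ≠ 0 := by
      rw [hc'def, Ne, ZMod.intCast_zmod_eq_zero_iff_dvd]
      exact hndvd
    rw [hmap]
    have step1 : ∏ a ∈ Finset.univ.erase (0 : ZMod p), (C a * X - C a + C c') =
        ∏ a ∈ Finset.univ.erase (0 : ZMod p), (C a * (X - 1 + C (a⁻¹ * c'))) := by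
      apply Finset.prod_congr rfl
      intro a ha
      have ha0 : a ≠ 0 := (Finset.mem_erase.mp ha).1
      rw [mul_add, mul_sub, mul_one, ← C_mul, mul_inv_cancel_left₀ ha0]
    rw [step1, Finset.prod_mul_distrib]
    have step2 : ∏ a ∈ Finset.univ.erase (0 : ZMod p), ((X : (ZMod p)[X]) - 1 + C (a⁻¹ * c')) =
        ∏ b ∈ Finset.univ.erase (0 : ZMod p), ((X : (ZMod p)[X]) - 1 + C b) := by
      apply Finset.prod_nbij' (fun a : ZMod p => a⁻¹ * c') (fun b : ZMod p => b⁻¹ * c')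
      · intro a ha
        have ha0 : a ≠ 0 := (Finset.mem_erase.mp ha).1
        simp [mul_ne_zero (inv_ne_zero ha0) hc']
      · intro b hb
        have hb0 : b ≠ 0 := (Finset.mem_erase.mp hb).1
        simp [mul_ne_zero (inv_ne_zero hb0) hc']
      · intro a ha
        have ha0 : a ≠ 0 := (Finset.mem_erase.mp ha).1
        field_simp
      · intro b hb
        have hb0 : b ≠ 0 := (Finset.mem_erase.mp hb).1
        field_simp
      · intro a _
        rfl
    rw [step2, lemD p]
    have step3 : ∏ a ∈ Finset.univ.erase (0 : ZMod p), (C a : (ZMod p)[X]) = -1 := by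
      rw [← map_prod, wilson_prod p]
      simp
    rw [step3, geom_eq p]
    have hIcc : Finset.Icc 1 (p - 1) = Finset.Ico 1 p := by
      rw [← Finset.Ico_add_one_right_eq_Icc]
      congr 1
      exact Nat.succ_pred_eq_of_pos hpf.out.pos
    have hsum : ∑ i ∈ Finset.range p, (X : (ZMod p)[X]) ^ i =
        1 + ∑ i ∈ Finset.Icc 1 (p - 1), X ^ i := by
      rw [hIcc, Finset.range_eq_Ico, Finset.sum_eq_sum_Ico_succ_bot hpf.out.pos]
      simp
    rw [hsum]
    ring
  · -- p ∣ c
    intro hdvd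
    have hc0 : c' = 0 := by
      rw [hc'def, ZMod.intCast_zmod_eq_zero_iff_dvd]
      exact hdvd
    rw [hmap, hc0]
    have step1 : ∏ a ∈ Finset.univ.erase (0 : ZMod p), (C a * X - C a + C (0 : ZMod p)) =
        ∏ a ∈ Finset.univ.erase (0 : ZMod p), (C a * (X - 1)) := by
      apply Finset.prod_congr rfl
      intro a _
      rw [map_zero, add_zero, mul_sub, mul_one]
    rw [step1, Finset.prod_mul_distrib, Finset.prod_const, card_erase p, ← map_prod,
      wilson_prod p]
    simp
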